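/- arXiv:1801.06754 — 2 statements merged into one kernel-verified Lean document; each statement's English description precedes it below -/
import Mathlib

section
/- Let G be a finite simple graph whose vertex set is partitioned into sets A and B, and let c be a positive real such that ŝ(G[A]) ≤ c·|A| and ŝ(G[B]) ≤ c·|B|. Then the sum-color cost satisfies ŝ(G) ≤ 2c·|V(G)|. -/
open Finset

/-- Auxiliary fuelled recursion for the slow-coloring game value.
`slowAux G n S` computes the value of the slow-coloring game on the
subgraph of `G` induced by the set `S` of (uncolored) vertices, provided
`n ≥ S.card`. -/
noncomputable def slowAux {V : Type*} [DecidableEq V] (G : SimpleGraph V) :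
    ℕ → Finset V → ℕ
  | 0, _ => 0
  | n + 1, S =>
      (S.powerset.filter fun M => M.Nonempty).sup fun M =>
        M.card + sInf {k : ℕ | ∃ X : Finset V, X ⊆ M ∧ X.Nonempty ∧
          (∀ x ∈ X, ∀ y ∈ X, ¬ G.Adj x y) ∧ k = slowAux G n (S \ X)}

/-- The sum-color cost `ŝ(G[S])` of the subgraph of `G` induced by the
vertex set `S`. -/
noncomputable def slowCost {V : Type*} [DecidableEq V] (G : SimpleGraph V)
    (S : Finset V) : ℕ :=
  slowAux G S.card S

section Aux

variable {V : Type*} [DecidableEq V] (G : SimpleGraph V)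

lemma slowAux_empty (m : ℕ) : slowAux G m (∅ : Finset V) = 0 := by
  cases m with
  | zero => rfl
  | succ n => simp [slowAux]

lemma slowAux_congr : ∀ n m (S : Finset V), S.card ≤ n → S.card ≤ m →
    slowAux G n S = slowAux G m S := by
  intro n
  induction n with
  | zero =>
    intro m S hn _
    have hS : S = ∅ := Finset.card_eq_zero.mp (Nat.le_zero.mp hn)
    subst hS
    rw [slowAux_empty, slowAux_empty]
  | succ n ih =>
    intro m S hn hm
    rcases Finset.eq_empty_or_nonempty S with rfl | hS
    · rw [slowAux_empty, slowAux_empty]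
    · obtain ⟨m', rfl⟩ : ∃ m', m = m' + 1 := by
        cases m with
        | zero => have := Finset.card_pos.mpr hS; omega
        | succ m' => exact ⟨m', rfl⟩
      rw [slowAux, slowAux]
      apply Finset.sup_congr rfl
      intro M hM
      simp only [Finset.mem_filter, Finset.mem_powerset] at hM
      have key : ∀ X : Finset V, X ⊆ M → X.Nonempty →
          slowAux G n (S \ X) = slowAux G m' (S \ X) := by
        intro X hXM hXne
        have hlt : (S \ X).card < S.card :=
          Finset.card_lt_card (Finset.sdiff_ssubset (hXM.trans hM.1) hXne)
        exact ih m' (S \ X) (by omega) (by omega)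
      congr 1
      congr 1
      ext k
      constructor
      · rintro ⟨X, hXM, hXne, hXind, rfl⟩
        exact ⟨X, hXM, hXne, hXind, key X hXM hXne⟩
      · rintro ⟨X, hXM, hXne, hXind, rfl⟩
        exact ⟨X, hXM, hXne, hXind, (key X hXM hXne).symm⟩

lemma slowAux_eq_slowCost (n : ℕ) (S : Finset V) (h : S.card ≤ n) :
    slowAux G n S = slowCost G S :=
  slowAux_congr G n S.card S h le_rfl

lemma slowCost_inner (P Q : Finset V) (hd : Disjoint P Q)
    (S M : Finset V) (hMS : M ⊆ S)
    (hMP : (M ∩ P).Nonempty) (hbig : M.card ≤ 2 * (M ∩ P).card)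
    (ih : ∀ T ⊂ S, slowCost G T ≤ 2 * slowCost G (T ∩ P) + 2 * slowCost G (T ∩ Q)) :
    ∃ X : Finset V, X ⊆ M ∧ X.Nonempty ∧ (∀ x ∈ X, ∀ y ∈ X, ¬ G.Adj x y) ∧
      M.card + slowCost G (S \ X) ≤ 2 * slowCost G (S ∩ P) + 2 * slowCost G (S ∩ Q) := by
  have hMPsub : M ∩ P ⊆ S ∩ P := Finset.inter_subset_inter hMS (le_refl P)
  have hTne : (S ∩ P).Nonempty := hMP.mono hMPsub
  obtain ⟨t, ht⟩ : ∃ t, (S ∩ P).card = t + 1 := by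
    have := Finset.card_pos.mpr hTne
    exact ⟨(S ∩ P).card - 1, by omega⟩
  have hunfold : slowCost G (S ∩ P) =
      ((S ∩ P).powerset.filter fun N => N.Nonempty).sup fun N =>
        N.card + sInf {k : ℕ | ∃ X : Finset V, X ⊆ N ∧ X.Nonempty ∧
          (∀ x ∈ X, ∀ y ∈ X, ¬ G.Adj x y) ∧ k = slowAux G t ((S ∩ P) \ X)} := by
    rw [slowCost, ht, slowAux]
  set innerSet : Set ℕ := {k : ℕ | ∃ X : Finset V, X ⊆ M ∩ P ∧ X.Nonempty ∧
      (∀ x ∈ X, ∀ y ∈ X, ¬ G.Adj x y) ∧ k = slowAux G t ((S ∩ P) \ X)} with hinnerSet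
  have hle1 : (M ∩ P).card + sInf innerSet ≤ slowCost G (S ∩ P) := by
    rw [hunfold]
    have hmem : M ∩ P ∈ (S ∩ P).powerset.filter fun N => N.Nonempty :=
      Finset.mem_filter.mpr ⟨Finset.mem_powerset.mpr hMPsub, hMP⟩
    exact Finset.le_sup (f := fun N => N.card + sInf {k : ℕ | ∃ X : Finset V,
      X ⊆ N ∧ X.Nonempty ∧ (∀ x ∈ X, ∀ y ∈ X, ¬ G.Adj x y) ∧
      k = slowAux G t ((S ∩ P) \ X)}) hmem
  have hne : innerSet.Nonempty := by
    obtain ⟨x, hx⟩ := hMP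
    exact ⟨slowAux G t ((S ∩ P) \ {x}), {x}, Finset.singleton_subset_iff.mpr hx,
      Finset.singleton_nonempty x, by simp [G.irrefl], rfl⟩
  obtain ⟨X, hXMP, hXne, hXind, hXval⟩ := Nat.sInf_mem hne
  have hXM : X ⊆ M := hXMP.trans Finset.inter_subset_left
  have hXP : X ⊆ P := hXMP.trans Finset.inter_subset_right
  have hXS : X ⊆ S := hXM.trans hMS
  have hXSP : X ⊆ S ∩ P := hXMP.trans hMPsub
  -- rewrite the value of sInf innerSet as a slowCost
  have hcardlt : ((S ∩ P) \ X).card < (S ∩ P).card :=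
    Finset.card_lt_card (Finset.sdiff_ssubset hXSP hXne)
  have hval : sInf innerSet = slowCost G ((S ∩ P) \ X) := by
    rw [hXval]
    exact slowAux_eq_slowCost G t ((S ∩ P) \ X) (by omega)
  have hstar : (M ∩ P).card + slowCost G ((S ∩ P) \ X) ≤ slowCost G (S ∩ P) := by
    rw [← hval]; exact hle1
  -- set algebra
  have hPX : (S \ X) ∩ P = (S ∩ P) \ X := by
    ext x
    simp only [Finset.mem_inter, Finset.mem_sdiff]
    tauto
  have hQX : (S \ X) ∩ Q = S ∩ Q := by
    ext x
    simp only [Finset.mem_inter, Finset.mem_sdiff]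
    constructor
    · rintro ⟨⟨h1, _⟩, h2⟩; exact ⟨h1, h2⟩
    · rintro ⟨h1, h2⟩
      refine ⟨⟨h1, fun hx => ?_⟩, h2⟩
      exact (Finset.disjoint_left.mp hd) (hXP hx) h2
  have hSX : S \ X ⊂ S := Finset.sdiff_ssubset hXS hXne
  have hih := ih (S \ X) hSX
  rw [hPX, hQX] at hih
  exact ⟨X, hXM, hXne, hXind, by omega⟩

lemma slowCost_split (P Q : Finset V) (hd : Disjoint P Q)
    (hcov : ∀ v : V, v ∈ P ∨ v ∈ Q) :
    ∀ S : Finset V, slowCost G S ≤ 2 * slowCost G (S ∩ P) + 2 * slowCost G (S ∩ Q) := by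
  intro S
  induction S using Finset.strongInduction with
  | _ S ih =>
    have ih' : ∀ T ⊂ S, slowCost G T ≤ 2 * slowCost G (T ∩ P) + 2 * slowCost G (T ∩ Q) :=
      fun T hT => ih T hT
    rcases Finset.eq_empty_or_nonempty S with rfl | hS
    · simp [slowCost, slowAux_empty]
    obtain ⟨n, hn⟩ : ∃ n, S.card = n + 1 := by
      have := Finset.card_pos.mpr hS
      exact ⟨S.card - 1, by omega⟩
    have hunfold : slowCost G S =
        (S.powerset.filter fun M => M.Nonempty).sup fun M =>
          M.card + sInf {k : ℕ | ∃ X : Finset V, X ⊆ M ∧ X.Nonempty ∧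
            (∀ x ∈ X, ∀ y ∈ X, ¬ G.Adj x y) ∧ k = slowAux G n (S \ X)} := by
      rw [slowCost, hn, slowAux]
    rw [hunfold]
    apply Finset.sup_le
    intro M hM
    simp only [Finset.mem_filter, Finset.mem_powerset] at hM
    obtain ⟨hMS, hMne⟩ := hM
    -- M splits into M ∩ P and M ∩ Q
    have hMcard : M.card ≤ (M ∩ P).card + (M ∩ Q).card := by
      have : M ⊆ (M ∩ P) ∪ (M ∩ Q) := by
        intro x hx
        rcases hcov x with h | h
        · exact Finset.mem_union_left _ (Finset.mem_inter.mpr ⟨hx, h⟩)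
        · exact Finset.mem_union_right _ (Finset.mem_inter.mpr ⟨hx, h⟩)
      calc M.card ≤ ((M ∩ P) ∪ (M ∩ Q)).card := Finset.card_le_card this
        _ ≤ (M ∩ P).card + (M ∩ Q).card := Finset.card_union_le _ _
    have hfinish : ∃ X : Finset V, X ⊆ M ∧ X.Nonempty ∧
        (∀ x ∈ X, ∀ y ∈ X, ¬ G.Adj x y) ∧
        M.card + slowCost G (S \ X) ≤
          2 * slowCost G (S ∩ P) + 2 * slowCost G (S ∩ Q) := by
      by_cases hbig : M.card ≤ 2 * (M ∩ P).card
      · have hMP : (M ∩ P).Nonempty := by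
          rw [← Finset.card_pos]
          have := Finset.card_pos.mpr hMne
          omega
        exact slowCost_inner G P Q hd S M hMS hMP hbig ih'
      · have hbig' : M.card ≤ 2 * (M ∩ Q).card := by omega
        have hMQ : (M ∩ Q).Nonempty := by
          rw [← Finset.card_pos]
          have := Finset.card_pos.mpr hMne
          omega
        have ih'' : ∀ T ⊂ S, slowCost G T ≤ 2 * slowCost G (T ∩ Q) + 2 * slowCost G (T ∩ P) :=
          fun T hT => by have := ih' T hT; omega
        obtain ⟨X, h1, h2, h3, h4⟩ :=
          slowCost_inner G Q P hd.symm S M hMS hMQ hbig' ih''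
        exact ⟨X, h1, h2, h3, by omega⟩
    obtain ⟨X, hXM, hXne, hXind, hXbound⟩ := hfinish
    have hmem : slowAux G n (S \ X) ∈ {k : ℕ | ∃ X : Finset V, X ⊆ M ∧ X.Nonempty ∧
        (∀ x ∈ X, ∀ y ∈ X, ¬ G.Adj x y) ∧ k = slowAux G n (S \ X)} :=
      ⟨X, hXM, hXne, hXind, rfl⟩
    have hsinf : sInf {k : ℕ | ∃ X : Finset V, X ⊆ M ∧ X.Nonempty ∧
        (∀ x ∈ X, ∀ y ∈ X, ¬ G.Adj x y) ∧ k = slowAux G n (S \ X)} ≤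
        slowAux G n (S \ X) := Nat.sInf_le hmem
    have hXS : X ⊆ S := hXM.trans hMS
    have hlt : (S \ X).card < S.card :=
      Finset.card_lt_card (Finset.sdiff_ssubset hXS hXne)
    have heq : slowAux G n (S \ X) = slowCost G (S \ X) :=
      slowAux_eq_slowCost G n (S \ X) (by omega)
    rw [heq] at hsinf
    omega

end Aux

theorem stmt_11 {V : Type*} [Fintype V] [DecidableEq V] (G : SimpleGraph V)
    (A B : Finset V) (hdisj : Disjoint A B) (hcover : ∀ v : V, v ∈ A ∨ v ∈ B)
    (c : ℝ) (hc : 0 < c)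
    (hA : (slowCost G A : ℝ) ≤ c * A.card)
    (hB : (slowCost G B : ℝ) ≤ c * B.card) :
    (slowCost G Finset.univ : ℝ) ≤ 2 * c * Fintype.card V := by
  have h := slowCost_split G A B hdisj hcover Finset.univ
  rw [Finset.univ_inter, Finset.univ_inter] at h
  have hcard : A.card + B.card = Fintype.card V := by
    rw [← Finset.card_union_of_disjoint hdisj]
    congr 1
    ext v
    simpa using hcover v
  have h' : (slowCost G Finset.univ : ℝ) ≤
      2 * (slowCost G A : ℝ) + 2 * (slowCost G B : ℝ) := by
    exact_mod_cast h
  have hcard' : (A.card : ℝ) + (B.card : ℝ) = (Fintype.card V : ℝ) := by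
    exact_mod_cast hcard
  nlinarith [hA, hB, hcard', h']
end

section
/- For every finite simple graph G, the sum-color cost satisfies ŝ(G) ≤ χ(G)·|V(G)|; moreover, if χ(G) ≥ 2 then the inequality is strict, i.e., ŝ(G) < χ(G)·|V(G)|. -/
open Finset

lemma slowAux_empty_s19 {V : Type*} [DecidableEq V] (G : SimpleGraph V) :
    ∀ n, slowAux G n (∅ : Finset V) = 0
  | 0 => rfl
  | n + 1 => by
      rw [slowAux]
      simp

/-- Pigeonhole step: Painter picks the largest color class within `M`. -/
lemma exists_good_class {V : Type*} [DecidableEq V] {G : SimpleGraph V} {c : ℕ}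
    (f : G.Coloring (Fin c)) {M : Finset V} (hMne : M.Nonempty) :
    ∃ X : Finset V, X ⊆ M ∧ X.Nonempty ∧
      (∀ x ∈ X, ∀ y ∈ X, ¬ G.Adj x y) ∧ M.card ≤ c * X.card := by
  obtain ⟨v, hv⟩ := hMne
  haveI : Nonempty (Fin c) := ⟨f v⟩
  have hsum : ∑ i : Fin c, (M.filter fun x => f x = i).card = M.card :=
    (Finset.card_eq_sum_card_fiberwise (fun x _ => Finset.mem_univ (f x))).symm
  have hle : ∑ _i : Fin c, M.card ≤ ∑ i : Fin c, c * (M.filter fun x => f x = i).card := by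
    rw [← Finset.mul_sum, hsum]
    simp [Fintype.card_fin, mul_comm]
  obtain ⟨i, _, hi⟩ := Finset.exists_le_of_sum_le Finset.univ_nonempty hle
  refine ⟨M.filter fun x => f x = i, Finset.filter_subset _ _, ?_, ?_, hi⟩
  · rw [← Finset.card_pos]
    have hMp := Finset.card_pos.2 ⟨v, hv⟩
    rcases Nat.eq_zero_or_pos (M.filter fun x => f x = i).card with h0 | h
    · rw [h0, Nat.mul_zero] at hi; omega
    · exact h
  · intro x hx y hy hadj
    simp only [Finset.mem_filter] at hx hy
    exact f.valid hadj (hx.2.trans hy.2.symm)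

lemma slowAux_le {V : Type*} [DecidableEq V] {G : SimpleGraph V} {c : ℕ}
    (f : G.Coloring (Fin c)) :
    ∀ m (S : Finset V), S.card ≤ m → slowAux G m S ≤ c * S.card := by
  intro m
  induction m with
  | zero => intro S hS; simp [slowAux]
  | succ n ih =>
    intro S hS
    rw [slowAux]
    apply Finset.sup_le
    intro M hM
    simp only [Finset.mem_filter, Finset.mem_powerset] at hM
    obtain ⟨hMS, hMne⟩ := hM
    obtain ⟨X, hXM, hXne, hXind, hXcard⟩ := exists_good_class f hMne
    have hXS : X ⊆ S := hXM.trans hMS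
    have hcard : (S \ X).card = S.card - X.card := Finset.card_sdiff_of_subset hXS
    have hXpos : 1 ≤ X.card := hXne.card_pos
    have hXle : X.card ≤ S.card := Finset.card_le_card hXS
    have hfuel : (S \ X).card ≤ n := by omega
    have hinf : sInf {k : ℕ | ∃ X' : Finset V, X' ⊆ M ∧ X'.Nonempty ∧
        (∀ x ∈ X', ∀ y ∈ X', ¬ G.Adj x y) ∧ k = slowAux G n (S \ X')} ≤
        slowAux G n (S \ X) :=
      Nat.sInf_le ⟨X, hXM, hXne, hXind, rfl⟩
    have hrec := ih (S \ X) hfuel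
    have : c * (S \ X).card + c * X.card = c * S.card := by
      rw [hcard, ← Nat.mul_add]
      congr 1
      omega
    omega

lemma slowAux_lt {V : Type*} [DecidableEq V] {G : SimpleGraph V} {c : ℕ}
    (hc : 2 ≤ c) (f : G.Coloring (Fin c)) :
    ∀ m (S : Finset V), S.card ≤ m → S.Nonempty →
      slowAux G m S + 1 ≤ c * S.card := by
  intro m
  induction m with
  | zero =>
    intro S hS hSne
    have := hSne.card_pos
    omega
  | succ n ih =>
    intro S hS hSne
    have hSpos : 1 ≤ S.card := hSne.card_pos
    rw [slowAux]
    rw [Nat.add_one_le_iff]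
    apply (Finset.sup_lt_iff (by simpa using Nat.mul_pos (by omega : 0 < c) hSpos)).2
    intro M hM
    simp only [Finset.mem_filter, Finset.mem_powerset] at hM
    obtain ⟨hMS, hMne⟩ := hM
    obtain ⟨X, hXM, hXne, hXind, hXcard⟩ := exists_good_class f hMne
    have hXS : X ⊆ S := hXM.trans hMS
    have hcard : (S \ X).card = S.card - X.card := Finset.card_sdiff_of_subset hXS
    have hXpos : 1 ≤ X.card := hXne.card_pos
    have hXle : X.card ≤ S.card := Finset.card_le_card hXS
    have hfuel : (S \ X).card ≤ n := by omega
    have hinf : sInf {k : ℕ | ∃ X' : Finset V, X' ⊆ M ∧ X'.Nonempty ∧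
        (∀ x ∈ X', ∀ y ∈ X', ¬ G.Adj x y) ∧ k = slowAux G n (S \ X')} ≤
        slowAux G n (S \ X) :=
      Nat.sInf_le ⟨X, hXM, hXne, hXind, rfl⟩
    have hsplit : c * (S \ X).card + c * X.card = c * S.card := by
      rw [hcard, ← Nat.mul_add]
      congr 1
      omega
    rcases (S \ X).eq_empty_or_nonempty with he | hne
    · -- then X = S, so M = S and the recursive value is 0
      have hXeq : X = S := Finset.Subset.antisymm hXS
        (by intro a ha; by_contra hax
            exact (Finset.eq_empty_iff_forall_notMem.1 he a)
              (Finset.mem_sdiff.2 ⟨ha, hax⟩))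
      have hz : slowAux G n (S \ X) = 0 := by rw [he, slowAux_empty_s19]
      have hMle : M.card ≤ S.card := Finset.card_le_card hMS
      have : 2 * S.card ≤ c * S.card := Nat.mul_le_mul_right _ hc
      omega
    · have hrec := ih (S \ X) hfuel hne
      omega

theorem stmt_19 {V : Type*} [Fintype V] [DecidableEq V] (G : SimpleGraph V) :
    (slowCost G Finset.univ : ℕ∞) ≤
        G.chromaticNumber * (Fintype.card V : ℕ∞) ∧
      (2 ≤ G.chromaticNumber →
        (slowCost G Finset.univ : ℕ∞) <
          G.chromaticNumber * (Fintype.card V : ℕ∞)) := by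
  classical
  set c : ℕ := ENat.toNat G.chromaticNumber with hcdef
  have hcol : G.Colorable c := G.colorable_chromaticNumber_of_fintype
  have hne : G.chromaticNumber ≠ ⊤ := by
    have := G.colorable_of_fintype.chromaticNumber_le
    exact fun h => by simp [h] at this
  have hcoe : G.chromaticNumber = (c : ℕ∞) := (ENat.coe_toNat hne).symm
  obtain ⟨f⟩ := hcol
  have hcardS : (Finset.univ : Finset V).card = Fintype.card V := rfl
  constructor
  · rw [hcoe]
    have h := slowAux_le f (Finset.univ : Finset V).card Finset.univ le_rfl
    rw [← Nat.cast_mul]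
    exact_mod_cast h
  · intro h2
    rw [hcoe] at h2 ⊢
    have hc2 : 2 ≤ c := by exact_mod_cast h2
    have hVne : (Finset.univ : Finset V).Nonempty := by
      rcases (Finset.univ : Finset V).eq_empty_or_nonempty with he | hne'
      · exfalso
        have hz : Fintype.card V = 0 := by
          rw [← Finset.card_univ, he, Finset.card_empty]
        haveI : IsEmpty V := Fintype.card_eq_zero_iff.1 hz
        have : G.Colorable 0 := ⟨⟨fun v => isEmptyElim v, fun {a} => isEmptyElim a⟩⟩
        have := this.chromaticNumber_le
        rw [hcoe] at this
        have : c ≤ 0 := by exact_mod_cast this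
        omega
      · exact hne'
    have h := slowAux_lt hc2 f (Finset.univ : Finset V).card Finset.univ le_rfl hVne
    rw [← Nat.cast_mul]
    have hlt : slowCost G Finset.univ < c * Fintype.card V := by
      unfold slowCost
      simp only [Finset.card_univ] at h ⊢
      omega
    exact_mod_cast hlt
end
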